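/- Let m and n be positive natural numbers with n odd and m even. The complete bipartite graph K_{m,n} is Perrin cordial if and only if m ≤ 6n + 26 and m ≠ 6n + 22. -/
import Mathlib


/-- The reindexed Perrin sequence: `P 0 = 0`, `P 1 = 3`, `P 2 = 0`, `P 3 = 2`,
and `P n = P (n-2) + P (n-3)` thereafter
(so `P 4 = 3`, `P 5 = 2`, `P 6 = 5`, ...). -/
def perrin : ℕ → ℕ
  | 0 => 0
  | 1 => 3
  | 2 => 0
  | 3 => 2
  | n + 4 => perrin (n + 2) + perrin (n + 1)

/-- The induced edge label: `f` assigns to each vertex the index of a Perrin number,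
and an edge `uv` gets the label `(P (f u) + P (f v)) mod 2`. -/
def perrinEdgeLabel {V : Type*} (f : V → ℕ) : Sym2 V → ℕ :=
  Sym2.lift ⟨fun u v => (perrin (f u) + perrin (f v)) % 2, fun u v => by simp [Nat.add_comm]⟩

/-- `eCount G f i` is the number of edges of `G` whose induced label under `f` is `i`. -/
noncomputable def eCount {V : Type*} (G : SimpleGraph V) (f : V → ℕ) (i : ℕ) : ℕ :=
  {e | e ∈ G.edgeSet ∧ perrinEdgeLabel f e = i}.ncard

/-- A finite simple graph `G` on `N` vertices is Perrin cordial if there is an injective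
labeling of its vertices by indices in `{0, 1, ..., N}` such that the numbers of edges
with induced label `0` and `1` differ by at most `1`. -/
def IsPerrinCordial {V : Type*} [Fintype V] (G : SimpleGraph V) : Prop :=
  ∃ f : V → Fin (Fintype.card V + 1), Function.Injective f ∧
    |(eCount G (fun v => (f v : ℕ)) 0 : ℤ) - (eCount G (fun v => (f v : ℕ)) 1 : ℤ)| ≤ 1

open Finset

lemma perrin_period : ∀ k, perrin (k + 8) % 2 = perrin (k + 1) % 2
  | 0 => by decide
  | 1 => by decide
  | 2 => by decide
  | (k+3) => by
    have h1 := perrin_period (k+1)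
    have h2 := perrin_period k
    have e1 : perrin (k + 3 + 8) = perrin (k+1+8) + perrin (k+8) := rfl
    have e2 : perrin (k + 3 + 1) = perrin (k+1+1) + perrin (k+1) := rfl
    omega

lemma perrin_parity : ∀ k, perrin (k+1) % 2 =
    (if (k+1)%7 = 0 ∨ (k+1)%7 = 1 ∨ (k+1)%7 = 4 ∨ (k+1)%7 = 6 then 1 else 0)
  | 0 => by decide
  | 1 => by decide
  | 2 => by decide
  | 3 => by decide
  | 4 => by decide
  | 5 => by decide
  | 6 => by decide
  | (k+7) => by
    have h1 := perrin_parity k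
    have h2 := perrin_period k
    have h3 : (k+7+1) % 7 = (k+1) % 7 := by omega
    rw [show k+7+1 = k+8 from rfl, h2, h3, h1]

/-- Number of odd Perrin values among indices `0..N`. -/
def ocount (N : ℕ) : ℕ :=
  ((Finset.range (N+1)).filter (fun k => perrin k % 2 = 1)).card

lemma ocount_formula (N : ℕ) : ocount N = N/7 + (N+6)/7 + (N+3)/7 + (N+1)/7 := by
  induction N with
  | zero => decide
  | succ N ih =>
    have hp := perrin_parity N
    have hstep : ocount (N+1) = ocount N +
        (if (N+1)%7 = 0 ∨ (N+1)%7 = 1 ∨ (N+1)%7 = 4 ∨ (N+1)%7 = 6 then 1 else 0) := by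
      unfold ocount
      rw [Finset.range_add_one, Finset.filter_insert]
      by_cases hc : (N+1)%7 = 0 ∨ (N+1)%7 = 1 ∨ (N+1)%7 = 4 ∨ (N+1)%7 = 6
      · rw [if_pos hc] at hp ⊢
        rw [if_pos hp, Finset.card_insert_of_notMem (by simp)]
      · rw [if_neg hc] at hp ⊢
        rw [if_neg (by omega)]
        omega
    by_cases hc : (N+1)%7 = 0 ∨ (N+1)%7 = 1 ∨ (N+1)%7 = 4 ∨ (N+1)%7 = 6
    · rw [if_pos hc] at hstep; omega
    · rw [if_neg hc] at hstep; omega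

lemma card_filter_prod_or {A B : Type*} [Fintype A] [Fintype B] [DecidableEq A] [DecidableEq B]
    (p1 p2 : A → Prop) (q1 q2 : B → Prop)
    [DecidablePred p1] [DecidablePred p2] [DecidablePred q1] [DecidablePred q2]
    (h : ∀ a, ¬ (p1 a ∧ p2 a)) :
    ((univ : Finset (A × B)).filter fun x => (p1 x.1 ∧ q1 x.2) ∨ (p2 x.1 ∧ q2 x.2)).card
      = (univ.filter p1).card * (univ.filter q1).card
        + (univ.filter p2).card * (univ.filter q2).card := by
  rw [← univ_product_univ, filter_or, filter_product, filter_product,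
    card_union_of_disjoint, card_product, card_product]
  rw [disjoint_left]
  rintro ⟨a, b⟩ h1 h2
  rw [mem_product, mem_filter, mem_filter] at h1 h2
  exact h a ⟨h1.1.2, h2.1.2⟩

lemma card_filter_not_eq {A : Type*} [Fintype A] (p : A → Prop) [DecidablePred p] :
    (univ.filter fun a => ¬ p a).card = Fintype.card A - (univ.filter p).card := by
  have := Finset.card_filter_add_card_filter_not (s := (univ : Finset A)) (p := p)
  rw [Finset.card_univ] at this
  omega

lemma eCount_eq_card (m n : ℕ) (g : Fin m ⊕ Fin n → ℕ) (i : ℕ) :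
    eCount (completeBipartiteGraph (Fin m) (Fin n)) g i
      = ((Finset.univ : Finset (Fin m × Fin n)).filter
          (fun x => (perrin (g (Sum.inl x.1)) + perrin (g (Sum.inr x.2))) % 2 = i)).card := by
  unfold eCount
  have hinj : Function.Injective (fun x : Fin m × Fin n => s(Sum.inl x.1, Sum.inr x.2) :
      Fin m × Fin n → Sym2 (Fin m ⊕ Fin n)) := by
    intro x y h
    rw [Sym2.eq_iff] at h
    rcases h with ⟨h1, h2⟩ | ⟨h1, h2⟩
    · exact Prod.ext (Sum.inl.inj h1) (Sum.inr.inj h2)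
    · exact absurd h1 (by simp)
  have hset : {e | e ∈ (completeBipartiteGraph (Fin m) (Fin n)).edgeSet ∧ perrinEdgeLabel g e = i}
      = (fun x : Fin m × Fin n => s(Sum.inl x.1, Sum.inr x.2)) ''
        {x : Fin m × Fin n | (perrin (g (Sum.inl x.1)) + perrin (g (Sum.inr x.2))) % 2 = i} := by
    ext e
    refine e.ind (fun u v => ?_)
    simp only [Set.mem_setOf_eq, SimpleGraph.mem_edgeSet, Set.mem_image]
    constructor
    · rintro ⟨hadj, hlab⟩
      rcases u with a | a <;> rcases v with b | b
      · simp [completeBipartiteGraph] at hadj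
      · exact ⟨(a, b), by simpa [perrinEdgeLabel] using hlab, rfl⟩
      · refine ⟨(b, a), ?_, Sym2.eq_swap⟩
        simp only [Set.mem_setOf_eq]
        rw [Nat.add_comm]
        simpa [perrinEdgeLabel] using hlab
      · simp [completeBipartiteGraph] at hadj
    · rintro ⟨x, hx, hex⟩
      rw [Sym2.eq_iff] at hex
      rcases hex with ⟨h1, h2⟩ | ⟨h1, h2⟩ <;> subst h1 <;> subst h2
      · exact ⟨by simp [completeBipartiteGraph], by simpa [perrinEdgeLabel] using hx⟩
      · refine ⟨by simp [completeBipartiteGraph], ?_⟩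
        show (perrin (g (Sum.inr x.2)) + perrin (g (Sum.inl x.1))) % 2 = i
        rwa [Nat.add_comm]
  rw [hset, Set.ncard_image_of_injective _ hinj]
  rw [show {x : Fin m × Fin n | (perrin (g (Sum.inl x.1)) + perrin (g (Sum.inr x.2))) % 2 = i}
      = ↑((Finset.univ : Finset (Fin m × Fin n)).filter
          (fun x => (perrin (g (Sum.inl x.1)) + perrin (g (Sum.inr x.2))) % 2 = i)) by
    ext x; simp]
  exact Set.ncard_coe_finset _

lemma eCount_one (m n : ℕ) (g : Fin m ⊕ Fin n → ℕ) :
    eCount (completeBipartiteGraph (Fin m) (Fin n)) g 1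
      = (univ.filter fun a : Fin m => perrin (g (Sum.inl a)) % 2 = 1).card
          * (n - (univ.filter fun b : Fin n => perrin (g (Sum.inr b)) % 2 = 1).card)
        + (m - (univ.filter fun a : Fin m => perrin (g (Sum.inl a)) % 2 = 1).card)
          * (univ.filter fun b : Fin n => perrin (g (Sum.inr b)) % 2 = 1).card := by
  rw [eCount_eq_card]
  rw [filter_congr (q := fun x : Fin m × Fin n =>
      (perrin (g (Sum.inl x.1)) % 2 = 1 ∧ ¬ (perrin (g (Sum.inr x.2)) % 2 = 1))
      ∨ (¬ (perrin (g (Sum.inl x.1)) % 2 = 1) ∧ perrin (g (Sum.inr x.2)) % 2 = 1))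
    (fun x _ => by constructor <;> intro h <;> omega)]
  rw [card_filter_prod_or (fun a : Fin m => perrin (g (Sum.inl a)) % 2 = 1)
      (fun a : Fin m => ¬ (perrin (g (Sum.inl a)) % 2 = 1))
      (fun b : Fin n => ¬ (perrin (g (Sum.inr b)) % 2 = 1))
      (fun b : Fin n => perrin (g (Sum.inr b)) % 2 = 1)
      (fun a h => h.2 h.1), card_filter_not_eq, card_filter_not_eq,
    Fintype.card_fin, Fintype.card_fin]

lemma eCount_zero (m n : ℕ) (g : Fin m ⊕ Fin n → ℕ) :
    eCount (completeBipartiteGraph (Fin m) (Fin n)) g 0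
      = (univ.filter fun a : Fin m => perrin (g (Sum.inl a)) % 2 = 1).card
          * (univ.filter fun b : Fin n => perrin (g (Sum.inr b)) % 2 = 1).card
        + (m - (univ.filter fun a : Fin m => perrin (g (Sum.inl a)) % 2 = 1).card)
          * (n - (univ.filter fun b : Fin n => perrin (g (Sum.inr b)) % 2 = 1).card) := by
  rw [eCount_eq_card]
  rw [filter_congr (q := fun x : Fin m × Fin n =>
      (perrin (g (Sum.inl x.1)) % 2 = 1 ∧ perrin (g (Sum.inr x.2)) % 2 = 1)
      ∨ (¬ (perrin (g (Sum.inl x.1)) % 2 = 1) ∧ ¬ (perrin (g (Sum.inr x.2)) % 2 = 1)))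
    (fun x _ => by constructor <;> intro h <;> omega)]
  rw [card_filter_prod_or (fun a : Fin m => perrin (g (Sum.inl a)) % 2 = 1)
      (fun a : Fin m => ¬ (perrin (g (Sum.inl a)) % 2 = 1))
      (fun b : Fin n => perrin (g (Sum.inr b)) % 2 = 1)
      (fun b : Fin n => ¬ (perrin (g (Sum.inr b)) % 2 = 1))
      (fun a h => h.2 h.1), card_filter_not_eq, card_filter_not_eq,
    Fintype.card_fin, Fintype.card_fin]

lemma card_filter_val_lt (k c : ℕ) (hc : c ≤ k) :
    ((univ : Finset (Fin k)).filter fun a : Fin k => (a : ℕ) < c).card = c := by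
  have h : ((univ : Finset (Fin k)).filter fun a : Fin k => (a : ℕ) < c)
      = (Finset.range c).attachFin (fun t ht => lt_of_lt_of_le (mem_range.mp ht) hc) := by
    ext a
    simp [Finset.mem_attachFin]
  rw [h, Finset.card_attachFin, card_range]

lemma perrinArith_mpr (m n O : ℕ) (k j : ℕ) (hk : n = 2*k+1) (hj : m = j + j)
    (hO : O = (m+n)/7 + (m+n+6)/7 + (m+n+3)/7 + (m+n+1)/7)
    (hle : m ≤ 6*n+26) (hne : m ≠ 6*n+22) : m/2 ≤ O ∧ O ≤ m/2 + n + 1 := by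
  have h7 : (m+n) % 7 = 0 ∨ (m+n)%7 = 1 ∨ (m+n)%7 = 2 ∨ (m+n)%7 = 3 ∨ (m+n)%7 = 4
      ∨ (m+n)%7 = 5 ∨ (m+n)%7 = 6 := by omega
  rcases h7 with h|h|h|h|h|h|h <;> omega

lemma perrinArith_mp (m n O α β : ℕ) (k j : ℕ) (hk : n = 2*k+1) (hj : m = j + j)
    (hO : O = (m+n)/7 + (m+n+6)/7 + (m+n+3)/7 + (m+n+1)/7)
    (h2a : 2*α = m) (hβn : β ≤ n) (hub : α + β ≤ O) (hlb : O ≤ α + β + 1) :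
    m ≤ 6*n+26 ∧ m ≠ 6*n+22 := by
  have h7 : (m+n) % 7 = 0 ∨ (m+n)%7 = 1 ∨ (m+n)%7 = 2 ∨ (m+n)%7 = 3 ∨ (m+n)%7 = 4
      ∨ (m+n)%7 = 5 ∨ (m+n)%7 = 6 := by omega
  rcases h7 with h|h|h|h|h|h|h <;> omega

/-- for `n` odd and `m` even (both positive), `K_{m,n}` is Perrin cordial
iff `m ≤ 6n + 26` and `m ≠ 6n + 22`. -/
theorem completeBipartiteGraph_isPerrinCordial_iff (m n : ℕ) (hm : 0 < m) (hn : 0 < n)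
    (hno : Odd n) (hme : Even m) :
    IsPerrinCordial (completeBipartiteGraph (Fin m) (Fin n)) ↔
      m ≤ 6 * n + 26 ∧ m ≠ 6 * n + 22 := by
  obtain ⟨k, hk⟩ := hno
  obtain ⟨j, hj⟩ := hme
  have hcardV : Fintype.card (Fin m ⊕ Fin n) = m + n := by simp
  have hOform := ocount_formula (m + n)
  constructor
  · rintro ⟨f, hfinj, hbal⟩
    set g : Fin m ⊕ Fin n → ℕ := fun v => (f v : ℕ) with hg
    have hginj : Function.Injective g := fun u v h => hfinj (Fin.val_injective h)
    set α := (univ.filter fun a : Fin m => perrin (g (Sum.inl a)) % 2 = 1).card with hα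
    set β := (univ.filter fun b : Fin n => perrin (g (Sum.inr b)) % 2 = 1).card with hβ
    have hαm : α ≤ m := by
      rw [hα]; exact (Finset.card_filter_le _ _).trans (by simp)
    have hβn : β ≤ n := by
      rw [hβ]; exact (Finset.card_filter_le _ _).trans (by simp)
    have he1 := eCount_one m n g
    have he0 := eCount_zero m n g
    rw [← hα, ← hβ] at he1 he0
    -- balance forces α = m/2
    have hdiff : (eCount (completeBipartiteGraph (Fin m) (Fin n)) g 0 : ℤ)
        - (eCount (completeBipartiteGraph (Fin m) (Fin n)) g 1 : ℤ)
        = (2*(α:ℤ) - m) * (2*(β:ℤ) - n) := by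
      rw [he0, he1]
      push_cast [Nat.cast_sub hαm, Nat.cast_sub hβn]
      ring
    rw [hdiff] at hbal
    have h2a : 2 * α = m := by
      by_contra hne
      set x : ℤ := 2*(α:ℤ) - m with hx
      set y : ℤ := 2*(β:ℤ) - n with hy
      have hyodd : y = 2*(β:ℤ) - (2*k+1) := by rw [hy]; push_cast [hk]; ring
      have hy1 : (1:ℤ) ≤ |y| := by
        rcases abs_cases y with ⟨h, _⟩ | ⟨h, _⟩ <;> omega
      have hx2 : (2:ℤ) ≤ |x| := by
        have hxe : x = 2*(α:ℤ) - (j+j) := by rw [hx]; push_cast [hj]; ring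
        have hxne : x ≠ 0 := by
          intro h0
          apply hne
          have : 2*(α:ℤ) = m := by omega
          exact_mod_cast this
        rcases abs_cases x with ⟨h, _⟩ | ⟨h, _⟩ <;> omega
      rw [abs_mul] at hbal
      nlinarith [abs_nonneg x, abs_nonneg y]
    -- count odd labels used
    set T : Finset ℕ := univ.image g with hT
    have hTcard : T.card = m + n := by
      rw [hT, Finset.card_image_of_injective _ hginj, card_univ, hcardV]
    have hTsub : T ⊆ Finset.range (m + n + 1) := by
      intro t ht
      rw [hT, Finset.mem_image] at ht
      obtain ⟨v, _, hv⟩ := ht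
      refine Finset.mem_range.mpr ?_
      have h1 := (f v).isLt
      have h2 : g v = (f v : ℕ) := rfl
      omega
    have hodds : (T.filter (fun t => perrin t % 2 = 1)).card = α + β := by
      rw [hT, Finset.filter_image, Finset.card_image_of_injective _ hginj]
      show (univ.filter (fun v : Fin m ⊕ Fin n => perrin (g v) % 2 = 1)).card = α + β
      have hsplit := Finset.card_toLeft_add_card_toRight
        (u := univ.filter (fun v : Fin m ⊕ Fin n => perrin (g v) % 2 = 1))
      rw [show (univ.filter (fun v : Fin m ⊕ Fin n => perrin (g v) % 2 = 1)).toLeft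
            = univ.filter (fun a : Fin m => perrin (g (Sum.inl a)) % 2 = 1) by
          ext a; simp,
        show (univ.filter (fun v : Fin m ⊕ Fin n => perrin (g v) % 2 = 1)).toRight
            = univ.filter (fun b : Fin n => perrin (g (Sum.inr b)) % 2 = 1) by
          ext b; simp] at hsplit
      omega
    have hub : α + β ≤ ocount (m + n) := by
      rw [← hodds]
      exact Finset.card_le_card (Finset.filter_subset_filter _ hTsub)
    have hlb : ocount (m + n) ≤ α + β + 1 := by
      have hsub : (Finset.range (m+n+1)).filter (fun t => perrin t % 2 = 1)
          ⊆ (T.filter (fun t => perrin t % 2 = 1)) ∪ (Finset.range (m+n+1) \ T) := by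
        intro t ht
        rw [Finset.mem_filter] at ht
        rw [Finset.mem_union, Finset.mem_filter, Finset.mem_sdiff]
        by_cases h : t ∈ T
        · exact Or.inl ⟨h, ht.2⟩
        · exact Or.inr ⟨ht.1, h⟩
      have h1 := Finset.card_le_card hsub
      have h2 := Finset.card_union_le (T.filter (fun t => perrin t % 2 = 1))
        (Finset.range (m+n+1) \ T)
      have h3 : (Finset.range (m+n+1) \ T).card = 1 := by
        rw [Finset.card_sdiff_of_subset hTsub, Finset.card_range, hTcard]
        omega
      unfold ocount
      omega
    clear_value α β
    exact perrinArith_mp m n (ocount (m+n)) α β k j hk hj hOform h2a hβn hub hlb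
  · rintro ⟨hle, hne⟩
    obtain ⟨hmO, hOub⟩ := perrinArith_mpr m n (ocount (m+n)) k j hk hj hOform hle hne
    set O := ocount (m + n) with hOdef
    set β := min (O - m / 2) n with hβ
    set Odds : Finset ℕ := (Finset.range (m+n+1)).filter (fun t => perrin t % 2 = 1) with hOddsDef
    set Evens : Finset ℕ := (Finset.range (m+n+1)).filter (fun t => ¬ (perrin t % 2 = 1))
      with hEvensDef
    have hOcard : Odds.card = O := rfl
    have hEcard : Evens.card = m + n + 1 - O := by
      have := Finset.card_filter_add_card_filter_not
        (s := Finset.range (m+n+1)) (p := fun t => perrin t % 2 = 1)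
      rw [Finset.card_range] at this
      rw [hEvensDef]
      have hOc : ((Finset.range (m+n+1)).filter (fun t => perrin t % 2 = 1)).card = O := hOcard
      omega
    set lO := Odds.sort (· ≤ ·) with hlO
    set lE := Evens.sort (· ≤ ·) with hlE
    have hlOlen : lO.length = O := by rw [hlO, Finset.length_sort, hOcard]
    have hlElen : lE.length = m + n + 1 - O := by rw [hlE, Finset.length_sort, hEcard]
    set LL : ℕ → ℕ := fun i => lO.getD i 0 with hLL
    set MM : ℕ → ℕ := fun i => lE.getD i 0 with hMM
    have hLLmem : ∀ i, i < O → LL i ∈ Odds := by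
      intro i hi
      have hi' : i < lO.length := by omega
      rw [hLL]
      simp only [List.getD_eq_getElem lO 0 hi']
      exact (Finset.mem_sort _).mp (List.getElem_mem hi')
    have hMMmem : ∀ i, i < m + n + 1 - O → MM i ∈ Evens := by
      intro i hi
      have hi' : i < lE.length := by omega
      rw [hMM]
      simp only [List.getD_eq_getElem lE 0 hi']
      exact (Finset.mem_sort _).mp (List.getElem_mem hi')
    have hLLodd : ∀ i, i < O → perrin (LL i) % 2 = 1 := by
      intro i hi
      have := hLLmem i hi
      rw [hOddsDef, Finset.mem_filter] at this
      exact this.2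
    have hMMeven : ∀ i, i < m + n + 1 - O → ¬ (perrin (MM i) % 2 = 1) := by
      intro i hi
      have := hMMmem i hi
      rw [hEvensDef, Finset.mem_filter] at this
      exact this.2
    have hLLlt : ∀ i, i < O → LL i < m + n + 1 := by
      intro i hi
      have := hLLmem i hi
      rw [hOddsDef, Finset.mem_filter, Finset.mem_range] at this
      exact this.1
    have hMMlt : ∀ i, i < m + n + 1 - O → MM i < m + n + 1 := by
      intro i hi
      have := hMMmem i hi
      rw [hEvensDef, Finset.mem_filter, Finset.mem_range] at this
      exact this.1
    have hLLinj : ∀ i i', i < O → i' < O → LL i = LL i' → i = i' := by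
      intro i i' hi hi' heq
      have hi1 : i < lO.length := by omega
      have hi1' : i' < lO.length := by omega
      rw [hLL] at heq
      simp only [List.getD_eq_getElem lO 0 hi1, List.getD_eq_getElem lO 0 hi1'] at heq
      exact ((Finset.sort_nodup _ _).getElem_inj_iff).mp heq
    have hMMinj : ∀ i i', i < m + n + 1 - O → i' < m + n + 1 - O → MM i = MM i' → i = i' := by
      intro i i' hi hi' heq
      have hi1 : i < lE.length := by omega
      have hi1' : i' < lE.length := by omega
      rw [hMM] at heq
      simp only [List.getD_eq_getElem lE 0 hi1, List.getD_eq_getElem lE 0 hi1'] at heq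
      exact ((Finset.sort_nodup _ _).getElem_inj_iff).mp heq
    have hLM : ∀ i i', i < O → i' < m + n + 1 - O → LL i ≠ MM i' := by
      intro i i' hi hi' heq
      exact hMMeven i' hi' (heq ▸ hLLodd i hi)
    -- index bounds
    have hOu : m / 2 + β ≤ O := by omega
    have hEu : m / 2 + (n - β) ≤ m + n + 1 - O := by omega
    have hβn : β ≤ n := min_le_right _ _
    -- the labeling
    set fval : Fin m ⊕ Fin n → ℕ := fun v => Sum.elim
      (fun a : Fin m => if (a : ℕ) < m / 2 then LL (a : ℕ) else MM ((a : ℕ) - m / 2))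
      (fun b : Fin n => if (b : ℕ) < β then LL (m / 2 + (b : ℕ))
        else MM (m / 2 + ((b : ℕ) - β))) v with hfval
    have hbnd : ∀ v, fval v < m + n + 1 := by
      rintro (a | b)
      · by_cases h : (a : ℕ) < m / 2
        · rw [hfval]; simp only [Sum.elim_inl, if_pos h]
          exact hLLlt _ (by omega)
        · rw [hfval]; simp only [Sum.elim_inl, if_neg h]
          exact hMMlt _ (by have := a.isLt; omega)
      · by_cases h : (b : ℕ) < β
        · rw [hfval]; simp only [Sum.elim_inr, if_pos h]
          exact hLLlt _ (by omega)
        · rw [hfval]; simp only [Sum.elim_inr, if_neg h]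
          exact hMMlt _ (by have := b.isLt; omega)
    have hparA : ∀ a : Fin m, (perrin (fval (Sum.inl a)) % 2 = 1) ↔ (a : ℕ) < m / 2 := by
      intro a
      by_cases h : (a : ℕ) < m / 2
      · rw [hfval]; simp only [Sum.elim_inl, if_pos h]
        exact ⟨fun _ => h, fun _ => hLLodd _ (by omega)⟩
      · rw [hfval]; simp only [Sum.elim_inl, if_neg h]
        exact ⟨fun hc => absurd hc (hMMeven _ (by have := a.isLt; omega)), fun hc => absurd hc h⟩
    have hparB : ∀ b : Fin n, (perrin (fval (Sum.inr b)) % 2 = 1) ↔ (b : ℕ) < β := by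
      intro b
      by_cases h : (b : ℕ) < β
      · rw [hfval]; simp only [Sum.elim_inr, if_pos h]
        exact ⟨fun _ => h, fun _ => hLLodd _ (by omega)⟩
      · rw [hfval]; simp only [Sum.elim_inr, if_neg h]
        exact ⟨fun hc => absurd hc (hMMeven _ (by have := b.isLt; omega)), fun hc => absurd hc h⟩
    have hfvalinj : Function.Injective fval := by
      rintro (a | b) (a' | b') heq
      · rw [hfval] at heq
        simp only [Sum.elim_inl] at heq
        by_cases h : (a : ℕ) < m / 2 <;> by_cases h' : (a' : ℕ) < m / 2
        · rw [if_pos h, if_pos h'] at heq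
          exact congrArg Sum.inl (Fin.ext (hLLinj _ _ (by omega) (by omega) heq))
        · rw [if_pos h, if_neg h'] at heq
          exact absurd heq (hLM _ _ (by omega) (by have := a'.isLt; omega))
        · rw [if_neg h, if_pos h'] at heq
          exact absurd heq.symm (hLM _ _ (by omega) (by have := a.isLt; omega))
        · rw [if_neg h, if_neg h'] at heq
          have := hMMinj _ _ (by have := a.isLt; omega) (by have := a'.isLt; omega) heq
          exact congrArg Sum.inl (Fin.ext (by omega))
      · rw [hfval] at heq
        simp only [Sum.elim_inl, Sum.elim_inr] at heq
        by_cases h : (a : ℕ) < m / 2 <;> by_cases h' : (b' : ℕ) < β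
        · rw [if_pos h, if_pos h'] at heq
          have := hLLinj _ _ (by omega) (by omega) heq
          omega
        · rw [if_pos h, if_neg h'] at heq
          exact absurd heq (hLM _ _ (by omega) (by have := b'.isLt; omega))
        · rw [if_neg h, if_pos h'] at heq
          exact absurd heq.symm (hLM _ _ (by omega) (by have := a.isLt; omega))
        · rw [if_neg h, if_neg h'] at heq
          have := hMMinj _ _ (by have := a.isLt; omega) (by have := b'.isLt; omega) heq
          have := a.isLt
          omega
      · rw [hfval] at heq
        simp only [Sum.elim_inl, Sum.elim_inr] at heq
        by_cases h : (b : ℕ) < β <;> by_cases h' : (a' : ℕ) < m / 2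
        · rw [if_pos h, if_pos h'] at heq
          have := hLLinj _ _ (by omega) (by omega) heq
          omega
        · rw [if_pos h, if_neg h'] at heq
          exact absurd heq (hLM _ _ (by omega) (by have := a'.isLt; omega))
        · rw [if_neg h, if_pos h'] at heq
          exact absurd heq.symm (hLM _ _ (by omega) (by have := b.isLt; omega))
        · rw [if_neg h, if_neg h'] at heq
          have := hMMinj _ _ (by have := b.isLt; omega) (by have := a'.isLt; omega) heq
          have := a'.isLt
          omega
      · rw [hfval] at heq
        simp only [Sum.elim_inr] at heq
        by_cases h : (b : ℕ) < β <;> by_cases h' : (b' : ℕ) < β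
        · rw [if_pos h, if_pos h'] at heq
          have := hLLinj _ _ (by omega) (by omega) heq
          exact congrArg Sum.inr (Fin.ext (by omega))
        · rw [if_pos h, if_neg h'] at heq
          exact absurd heq (hLM _ _ (by omega) (by have := b'.isLt; omega))
        · rw [if_neg h, if_pos h'] at heq
          exact absurd heq.symm (hLM _ _ (by omega) (by have := b.isLt; omega))
        · rw [if_neg h, if_neg h'] at heq
          have := hMMinj _ _ (by have := b.isLt; omega) (by have := b'.isLt; omega) heq
          exact congrArg Sum.inr (Fin.ext (by omega))
    refine ⟨fun v => ⟨fval v, by rw [hcardV]; exact hbnd v⟩, ?_, ?_⟩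
    · intro u v huv
      apply hfvalinj
      exact congrArg Fin.val huv
    · have hgeq : (fun v : Fin m ⊕ Fin n =>
          ((⟨fval v, by rw [hcardV]; exact hbnd v⟩ : Fin (Fintype.card (Fin m ⊕ Fin n) + 1)) : ℕ))
          = fval := rfl
      rw [hgeq, eCount_zero, eCount_one]
      have hαcard : (univ.filter fun a : Fin m => perrin (fval (Sum.inl a)) % 2 = 1).card
          = m / 2 := by
        rw [filter_congr (fun a _ => by
          rw [show (perrin (fval (Sum.inl a)) % 2 = 1) = ((a : ℕ) < m / 2) from
            propext (hparA a)])]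
        exact card_filter_val_lt m (m/2) (by omega)
      have hβcard : (univ.filter fun b : Fin n => perrin (fval (Sum.inr b)) % 2 = 1).card
          = β := by
        rw [filter_congr (fun b _ => by
          rw [show (perrin (fval (Sum.inr b)) % 2 = 1) = ((b : ℕ) < β) from
            propext (hparB b)])]
        exact card_filter_val_lt n β hβn
      rw [hαcard, hβcard]
      have hmm : m - m / 2 = m / 2 := by omega
      rw [hmm]
      have h0 : m / 2 * β + m / 2 * (n - β) = m / 2 * n := by
        rw [← Nat.mul_add]
        congr 1
        omega
      have h1 : m / 2 * (n - β) + m / 2 * β = m / 2 * n := by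
        rw [← Nat.mul_add]
        congr 1
        omega
      rw [h0, h1, sub_self, abs_zero]
      exact zero_le_one
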